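/- Let F be a finite field and T ∈ M_m(F) with reducible characteristic polynomial f_T. Then for any S = ⟨a_0, ..., a_{n-1}⟩ ∈ F^n, the characteristic polynomial of the TSR matrix [⟨T,S⟩] is reducible over F. -/

import Mathlib

open Polynomial Matrix

/-- The `nm × nm` TSR block matrix: identity blocks on the superdiagonal and
blocks `a_i • T` in the last block row. -/
def tsrMatrix {F : Type*} [Field F] {m n : ℕ} (T : Matrix (Fin m) (Fin m) F)
    (a : Fin n → F) : Matrix (Fin n × Fin m) (Fin n × Fin m) F :=
  fun p q =>
    if (q.1 : ℕ) = (p.1 : ℕ) + 1 then (if p.2 = q.2 then 1 else 0)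
    else if (p.1 : ℕ) = n - 1 then a q.1 * T p.2 q.2
    else 0

namespace TSRAux

variable {F : Type*} [Field F] {m n : ℕ}

/-- The polynomial `a_0 + a_1 X + ... + a_{n-1} X^{n-1}`. -/
noncomputable def fS (a : Fin n → F) : F[X] := ∑ j : Fin n, C (a j) * X ^ (j : ℕ)

/-- Bivariate homogenization of `g`, evaluated at `(p, q)`. -/
noncomputable def hmg (g : F[X]) (p q : F[X]) : F[X] :=
  ∑ i ∈ Finset.range (g.natDegree + 1), C (g.coeff i) * p ^ i * q ^ (g.natDegree - i)

lemma hmg_q_zero (g : F[X]) (p : F[X]) :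
    hmg g p 0 = C g.leadingCoeff * p ^ g.natDegree := by
  unfold hmg
  rw [Finset.sum_range_succ, Finset.sum_eq_zero, Nat.sub_self, pow_zero, mul_one, zero_add,
    leadingCoeff]
  intro i hi
  rw [Finset.mem_range] at hi
  rw [zero_pow (by omega), mul_zero]

lemma hmg_spec (g p q : F[X]) (hq : q ≠ 0) :
    algebraMap F[X] (FractionRing F[X]) (hmg g p q)
      = (algebraMap F[X] (FractionRing F[X]) q) ^ g.natDegree *
        Polynomial.eval₂ ((algebraMap F[X] (FractionRing F[X])).comp (C : F →+* F[X]))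
          (algebraMap F[X] (FractionRing F[X]) p / algebraMap F[X] (FractionRing F[X]) q) g := by
  set φ := algebraMap F[X] (FractionRing F[X]) with hφ
  have hq' : φ q ≠ 0 :=
    (map_ne_zero_iff φ (IsFractionRing.injective _ _)).mpr hq
  rw [Polynomial.eval₂_eq_sum_range, hmg, map_sum, Finset.mul_sum]
  refine Finset.sum_congr rfl fun i hi => ?_
  rw [Finset.mem_range] at hi
  have hile : i ≤ g.natDegree := by omega
  rw [_root_.map_mul, _root_.map_mul, map_pow, map_pow]
  have hsub : φ q ^ (g.natDegree - i) = φ q ^ g.natDegree * (φ q ^ i)⁻¹ :=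
    pow_sub₀ _ hq' hile
  rw [RingHom.comp_apply, hsub, div_pow]
  field_simp

lemma hmg_mul (g h : F[X]) (hg : g ≠ 0) (hh : h ≠ 0) (p q : F[X]) :
    hmg (g * h) p q = hmg g p q * hmg h p q := by
  by_cases hq : q = 0
  · subst hq
    rw [hmg_q_zero, hmg_q_zero, hmg_q_zero, natDegree_mul hg hh, leadingCoeff_mul, pow_add, C_mul]
    ring
  · apply IsFractionRing.injective F[X] (FractionRing F[X])
    rw [_root_.map_mul, hmg_spec _ _ _ hq, hmg_spec _ _ _ hq, hmg_spec _ _ _ hq, eval₂_mul,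
      natDegree_mul hg hh, pow_add]
    ring

lemma fS_natDegree_le (a : Fin n → F) (hn : 1 ≤ n) : (fS a).natDegree ≤ n - 1 := by
  unfold fS
  refine natDegree_sum_le_of_forall_le _ _ fun j _ => ?_
  refine le_trans (natDegree_C_mul_le _ _) ?_
  rw [natDegree_X_pow]
  have := j.isLt
  omega

lemma hmg_not_isUnit (g : F[X]) (hgd : 1 ≤ g.natDegree) (hn : 1 ≤ n) (a : Fin n → F) :
    ¬ IsUnit (hmg g (X ^ n) (fS a)) := by
  have hg0 : g ≠ 0 := fun h => by simp [h] at hgd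
  set d := g.natDegree with hd
  set q := fS a with hqdef
  have hqdeg : q.natDegree ≤ n - 1 := fS_natDegree_le a hn
  have htail : (∑ i ∈ Finset.range d, C (g.coeff i) * (X ^ n : F[X]) ^ i * q ^ (d - i)).degree
      < ((n * d : ℕ) : WithBot ℕ) := by
    refine lt_of_le_of_lt (degree_sum_le _ _) ?_
    rw [Finset.sup_lt_iff (WithBot.bot_lt_coe _)]
    intro i hi
    rw [Finset.mem_range] at hi
    have h1 : (C (g.coeff i) * (X ^ n : F[X]) ^ i * q ^ (d - i)).degree
        ≤ ((n * i : ℕ) : WithBot ℕ) + ((d - i) * (n - 1) : ℕ) := by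
      refine le_trans (degree_mul_le _ _) (add_le_add ?_ ?_)
      · rw [← pow_mul]
        refine le_trans (degree_mul_le _ _) ?_
        rw [degree_X_pow]
        refine le_trans (add_le_add degree_C_le le_rfl) ?_
        simp [mul_comm]
      · refine le_trans (degree_le_natDegree) ?_
        have := natDegree_pow_le (p := q) (n := d - i)
        have h2 : (q ^ (d - i)).natDegree ≤ (d - i) * (n - 1) :=
          le_trans this (Nat.mul_le_mul_left _ hqdeg)
        exact_mod_cast Nat.cast_le.mpr h2
    refine lt_of_le_of_lt h1 ?_
    rw [← Nat.cast_add]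
    rw [Nat.cast_lt]
    have he : 0 < d - i := by omega
    have : (d - i) * (n - 1) < (d - i) * n :=
      Nat.mul_lt_mul_of_pos_left (by omega) (by omega)
    have hsplit : n * i + (d - i) * n = n * d := by
      have : i + (d - i) = d := by omega
      calc n * i + (d - i) * n = n * (i + (d - i)) := by ring
        _ = n * d := by rw [this]
    omega
  have hlc : g.coeff d ≠ 0 := by
    have : g.coeff d = g.leadingCoeff := by rw [hd]; rfl
    rw [this]
    exact leadingCoeff_ne_zero.mpr hg0
  have hdeg : (hmg g (X ^ n) q).degree = ((n * d : ℕ) : WithBot ℕ) := by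
    unfold hmg
    rw [← hd, Finset.sum_range_succ, Nat.sub_self, pow_zero, mul_one, ← pow_mul,
      degree_add_eq_right_of_degree_lt, degree_C_mul_X_pow _ hlc]
    rw [degree_C_mul_X_pow _ hlc]
    exact htail
  intro hu
  have := degree_eq_zero_of_isUnit hu
  rw [hdeg] at this
  have : n * d = 0 := by exact_mod_cast this
  have : 0 < n * d := Nat.mul_pos (by omega) (by omega)
  omega

/-- The `m × m` matrix `X^n • 1 - f_S • T`. -/
noncomputable def Dm (T : Matrix (Fin m) (Fin m) F) (a : Fin n → F) :
    Matrix (Fin m) (Fin m) F[X] :=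
  Matrix.of fun s t => (if s = t then (X : F[X]) ^ n else 0) - fS a * C (T s t)

lemma eval_charpoly' {K : Type*} [Field K] {k : ℕ} (M : Matrix (Fin k) (Fin k) K) (r : K) :
    Polynomial.eval r M.charpoly
      = Matrix.det (Matrix.of fun s t => (if s = t then r else 0) - M s t) := by
  rw [Matrix.charpoly, ← Polynomial.coe_evalRingHom, RingHom.map_det]
  congr 1
  ext s t
  by_cases hst : s = t
  · subst hst
    simp [charmatrix_apply_eq]
  · simp [charmatrix_apply_ne _ _ _ hst, hst]

lemma det_Dm (T : Matrix (Fin m) (Fin m) F) (a : Fin n → F) :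
    (Dm T a).det = hmg T.charpoly (X ^ n) (fS a) := by
  have hdeg : T.charpoly.natDegree = m := by
    rw [charpoly_natDegree_eq_dim, Fintype.card_fin]
  by_cases hq : fS a = 0
  · rw [hq, hmg_q_zero, (Matrix.charpoly_monic T).leadingCoeff, C_1, one_mul, hdeg]
    have hDd : Dm T a = Matrix.diagonal (fun _ : Fin m => (X : F[X]) ^ n) := by
      refine Matrix.ext fun s t => ?_
      by_cases hst : s = t <;> simp [Dm, hq, hst, Matrix.diagonal]
    rw [hDd, det_diagonal, Finset.prod_const, Finset.card_univ, Fintype.card_fin]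
  · apply IsFractionRing.injective F[X] (FractionRing F[X])
    set φ := algebraMap F[X] (FractionRing F[X]) with hφ
    set ψ := φ.comp (C : F →+* F[X]) with hψ
    set r := φ ((X : F[X]) ^ n) / φ (fS a) with hr
    have hq' : φ (fS a) ≠ 0 :=
      (map_ne_zero_iff φ (IsFractionRing.injective _ _)).mpr hq
    have hfs : ∀ x : F, φ (C x) = ψ x := fun x => rfl
    have hmap : (Dm T a).map φ
        = φ (fS a) • (Matrix.of fun s t => (if s = t then r else 0) - (T.map (ψ ·)) s t) := by
      refine Matrix.ext fun s t => ?_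
      simp only [Dm, Matrix.map_apply, Matrix.smul_apply, Matrix.of_apply, smul_eq_mul]
      rw [_root_.map_sub, _root_.map_mul, mul_sub, hfs, apply_ite φ, map_zero]
      congr 1
      by_cases hst : s = t
      · rw [if_pos hst, if_pos hst, hr, mul_div_cancel₀ _ hq']
      · rw [if_neg hst, if_neg hst, mul_zero]
    rw [RingHom.map_det, hmg_spec _ _ _ hq, hdeg, RingHom.mapMatrix_apply, hmap, det_smul,
      Fintype.card_fin, ← eval_charpoly' (T.map (ψ ·)) r, Matrix.charpoly_map, eval_map]

/-- The unipotent column-operation matrix. -/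
noncomputable def Em : Matrix (Fin n × Fin m) (Fin n × Fin m) F[X] :=
  Matrix.of fun p q =>
    if (q.1 : ℕ) = 0 then (if p.2 = q.2 then (X : F[X]) ^ (p.1 : ℕ) else 0)
    else (if p = q then 1 else 0)

/-- The result of the column operations on the charmatrix. -/
noncomputable def Pm (T : Matrix (Fin m) (Fin m) F) (a : Fin n → F) :
    Matrix (Fin n × Fin m) (Fin n × Fin m) F[X] :=
  Matrix.of fun p q =>
    if (q.1 : ℕ) = 0 then (if (p.1 : ℕ) = n - 1 then Dm T a p.2 q.2 else 0)
    else charmatrix (tsrMatrix T a) p q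

lemma det_Em : (Em : Matrix (Fin n × Fin m) (Fin n × Fin m) F[X]).det = 1 := by
  classical
  have hbt : BlockTriangular (Em : Matrix (Fin n × Fin m) (Fin n × Fin m) F[X])
      (fun p => if (p.1 : ℕ) = 0 then 1 else 0) := by
    intro p q hlt
    simp only at hlt
    have hp0 : (p.1 : ℕ) = 0 := by
      by_contra h
      rw [if_neg h] at hlt
      omega
    have hq0 : ¬ (q.1 : ℕ) = 0 := by
      by_contra h
      rw [if_pos hp0, if_pos h] at hlt
      omega
    have hpq : p ≠ q := fun h => hq0 (h ▸ hp0)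
    simp [Em, hq0, hpq]
  rw [hbt.det]
  refine Finset.prod_eq_one fun k hk => ?_
  suffices h : (Em : Matrix (Fin n × Fin m) (Fin n × Fin m) F[X]).toSquareBlock
      (fun p => if (p.1 : ℕ) = 0 then 1 else 0) k = 1 by
    rw [h, det_one]
  refine Matrix.ext fun p q => ?_
  rw [Matrix.toSquareBlock_def]
  have hbp : (if (p.1.1 : ℕ) = 0 then 1 else 0) = k := p.2
  have hbq : (if (q.1.1 : ℕ) = 0 then 1 else 0) = k := q.2
  by_cases hp0 : (p.1.1 : ℕ) = 0
  · have hq0 : (q.1.1 : ℕ) = 0 := by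
      rw [if_pos hp0] at hbp
      by_contra h
      rw [if_neg h] at hbq
      omega
    have h1 : p.1.1 = q.1.1 := Fin.ext (by rw [hp0, hq0])
    have h2 : (p = q) ↔ (p.1.2 = q.1.2) := by
      constructor
      · intro h; rw [h]
      · intro h
        apply Subtype.ext
        exact Prod.ext h1 h
    by_cases h3 : p.1.2 = q.1.2
    · simp [Em, hp0, hq0, h3, h2.mpr h3, Matrix.one_apply]
    · have hne : p ≠ q := fun h => h3 (h2.mp h)
      simp [Em, hp0, hq0, h3, hne, Matrix.one_apply]
  · have hq0 : ¬ (q.1.1 : ℕ) = 0 := by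
      rw [if_neg hp0] at hbp
      by_contra h
      rw [if_pos h] at hbq
      omega
    have h2 : (p = q) ↔ (p.1 = q.1) := Subtype.ext_iff
    by_cases h3 : p.1 = q.1
    · simp [Em, hq0, h3, h2.mpr h3, Matrix.one_apply]
    · have hne : p ≠ q := fun h => h3 (h2.mp h)
      simp [Em, hq0, h3, hne, Matrix.one_apply]

lemma sum_collapse_val {M : Type*} [AddCommMonoid M] (c : ℕ) (hc : c < n) (f : Fin n → M) :
    (∑ x : Fin n, if (x : ℕ) = c then f x else 0) = f ⟨c, hc⟩ := by
  rw [Finset.sum_eq_single (⟨c, hc⟩ : Fin n)]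
  · simp
  · intro x _ hx
    rw [if_neg]
    intro h
    exact hx (Fin.ext h)
  · simp

lemma mulE (hn : 1 ≤ n) (T : Matrix (Fin m) (Fin m) F) (a : Fin n → F) :
    charmatrix (tsrMatrix T a) * Em = Pm T a := by
  refine Matrix.ext fun pp qq => ?_
  obtain ⟨i, s⟩ := pp
  obtain ⟨j, t⟩ := qq
  rw [Matrix.mul_apply]
  by_cases hj : (j : ℕ) = 0
  · have hPm : Pm T a (i, s) (j, t) = (if (i : ℕ) = n - 1 then Dm T a s t else 0) := by
      simp [Pm, hj]
    have hEm : ∀ (x : Fin n) (y : Fin m),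
        Em (x, y) (j, t) = (if y = t then (X : F[X]) ^ (x : ℕ) else 0) := by
      intro x y
      simp [Em, hj]
    have step1 : (∑ x : Fin n, ∑ y : Fin m, charmatrix (tsrMatrix T a) (i, s) (x, y) *
          Em (x, y) (j, t))
        = ∑ x : Fin n, charmatrix (tsrMatrix T a) (i, s) (x, t) * (X : F[X]) ^ (x : ℕ) := by
      refine Finset.sum_congr rfl fun x _ => ?_
      rw [Finset.sum_eq_single t]
      · rw [hEm, if_pos rfl]
      · intro y _ hy
        rw [hEm, if_neg hy, mul_zero]
      · simp
    rw [hPm, Fintype.sum_prod_type, step1]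
    have hcm : ∀ x : Fin n, charmatrix (tsrMatrix T a) (i, s) (x, t)
        = (if (i, s) = (x, t) then (X : F[X]) else 0) - C (tsrMatrix T a (i, s) (x, t)) := by
      intro x
      rw [charmatrix_apply, Matrix.diagonal_apply]
    simp only [hcm, sub_mul]
    rw [Finset.sum_sub_distrib]
    by_cases hi : (i : ℕ) = n - 1
    · rw [if_pos hi]
      have h1 : (∑ x : Fin n, (if (i, s) = (x, t) then (X : F[X]) else 0) * X ^ (x : ℕ))
          = (if s = t then (X : F[X]) ^ n else 0) := by
        have : ∀ x : Fin n, ((if (i, s) = (x, t) then (X : F[X]) else 0) * X ^ (x : ℕ))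
            = (if (x : ℕ) = (i : ℕ) then (if s = t then (X : F[X]) * X ^ (x : ℕ) else 0) else 0) := by
          intro x
          by_cases hx : (x : ℕ) = (i : ℕ)
          · have hxi : x = i := Fin.ext hx
            subst hxi
            by_cases hst : s = t <;> simp [hst, Prod.ext_iff]
          · have : ¬ ((i, s) = (x, t)) := by
              intro h
              exact hx (congrArg (fun z : Fin n × Fin m => ((z.1 : Fin n) : ℕ)) h).symm
            simp [this, hx]
        rw [Finset.sum_congr rfl fun x _ => this x, sum_collapse_val (i : ℕ) i.isLt]
        by_cases hst : s = t
        · have hin : (i : ℕ) + 1 = n := by omega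
          rw [if_pos hst, if_pos hst, ← pow_succ', hin]
        · rw [if_neg hst, if_neg hst]
      have h2 : (∑ x : Fin n, C (tsrMatrix T a (i, s) (x, t)) * X ^ (x : ℕ))
          = fS a * C (T s t) := by
        have : ∀ x : Fin n, C (tsrMatrix T a (i, s) (x, t)) * X ^ (x : ℕ)
            = C (a x) * X ^ (x : ℕ) * C (T s t) := by
          intro x
          have hx1 : ¬ ((x : ℕ) = (i : ℕ) + 1) := by
            have := x.isLt
            omega
          show C (if (x : ℕ) = (i : ℕ) + 1 then (if s = t then 1 else 0)
              else if (i : ℕ) = n - 1 then a x * T s t else 0) * X ^ (x : ℕ) = _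
          rw [if_neg hx1, if_pos hi, C_mul]
          ring
        rw [Finset.sum_congr rfl fun x _ => this x, ← Finset.sum_mul, fS]
      rw [h1, h2, Dm]
      rfl
    · rw [if_neg hi]
      have hisucc : (i : ℕ) + 1 < n := by
        have := i.isLt
        omega
      have h1 : (∑ x : Fin n, (if (i, s) = (x, t) then (X : F[X]) else 0) * X ^ (x : ℕ))
          = (if s = t then (X : F[X]) ^ ((i : ℕ) + 1) else 0) := by
        have : ∀ x : Fin n, ((if (i, s) = (x, t) then (X : F[X]) else 0) * X ^ (x : ℕ))
            = (if (x : ℕ) = (i : ℕ) then (if s = t then (X : F[X]) * X ^ (x : ℕ) else 0) else 0) := by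
          intro x
          by_cases hx : (x : ℕ) = (i : ℕ)
          · have hxi : x = i := Fin.ext hx
            subst hxi
            by_cases hst : s = t <;> simp [hst, Prod.ext_iff]
          · have : ¬ ((i, s) = (x, t)) := by
              intro h
              exact hx (congrArg (fun z : Fin n × Fin m => ((z.1 : Fin n) : ℕ)) h).symm
            simp [this, hx]
        rw [Finset.sum_congr rfl fun x _ => this x, sum_collapse_val (i : ℕ) i.isLt]
        by_cases hst : s = t
        · rw [if_pos hst, if_pos hst, ← pow_succ']
        · rw [if_neg hst, if_neg hst]
      have h2 : (∑ x : Fin n, C (tsrMatrix T a (i, s) (x, t)) * X ^ (x : ℕ))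
          = (if s = t then (X : F[X]) ^ ((i : ℕ) + 1) else 0) := by
        have : ∀ x : Fin n, C (tsrMatrix T a (i, s) (x, t)) * X ^ (x : ℕ)
            = (if (x : ℕ) = (i : ℕ) + 1 then (if s = t then (X : F[X]) ^ (x : ℕ) else 0) else 0) := by
          intro x
          show C (if (x : ℕ) = (i : ℕ) + 1 then (if s = t then 1 else 0)
              else if (i : ℕ) = n - 1 then a x * T s t else 0) * X ^ (x : ℕ) = _
          by_cases hx : (x : ℕ) = (i : ℕ) + 1
          · rw [if_pos hx, if_pos hx]
            by_cases hst : s = t <;> simp [hst]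
          · rw [if_neg hx, if_neg hi, if_neg hx, map_zero, zero_mul]
        rw [Finset.sum_congr rfl fun x _ => this x, sum_collapse_val ((i : ℕ) + 1) hisucc]
      rw [h1, h2, sub_self]
  · have hPm : Pm T a (i, s) (j, t) = charmatrix (tsrMatrix T a) (i, s) (j, t) := by
      simp [Pm, hj]
    rw [hPm, Finset.sum_eq_single ((j, t) : Fin n × Fin m)]
    · have : (Em (j, t) (j, t) : F[X]) = 1 := by simp [Em, hj]
      rw [this, mul_one]
    · intro r _ hr
      have : (Em r (j, t) : F[X]) = 0 := by simp [Em, hj, hr]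
      rw [this, mul_zero]
    · simp

lemma det_Pm (hn : 1 ≤ n) (hm : 1 ≤ m) (T : Matrix (Fin m) (Fin m) F) (a : Fin n → F) :
    ∃ u : F[X], IsUnit u ∧ (Pm T a).det = u * (Dm T a).det := by
  classical
  obtain ⟨n', rfl⟩ : ∃ n', n = n' + 1 := ⟨n - 1, by omega⟩
  set π : Equiv.Perm (Fin (n' + 1) × Fin m) :=
    Equiv.prodCongr (finRotate (n' + 1)) (Equiv.refl (Fin m)) with hπ
  set Q := (Pm T a).submatrix id π with hQ
  have hQapp : ∀ p q : Fin (n' + 1) × Fin m, Q p q = Pm T a p (q.1 + 1, q.2) := by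
    intro p q
    simp [hQ, hπ, Matrix.submatrix_apply, Equiv.prodCongr_apply, Prod.map,
      finRotate_succ_apply]
  set b : Fin (n' + 1) × Fin m → ℕ := fun p => n' - (p.1 : ℕ) with hb
  have hbt : BlockTriangular Q b := by
    intro p q hlt
    have hpq : (p.1 : ℕ) < (q.1 : ℕ) := by
      have h1 := p.1.isLt
      have h2 := q.1.isLt
      simp only [hb] at hlt
      omega
    have hq2 := q.1.isLt
    rw [hQapp]
    by_cases hq1 : (q.1 : ℕ) = n'
    · have hval : ((q.1 + 1 : Fin (n' + 1)) : ℕ) = 0 := by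
        rw [Fin.val_add_one, if_pos (Fin.ext (by rw [hq1, Fin.val_last]))]
      show (if ((q.1 + 1 : Fin (n' + 1)) : ℕ) = 0
          then (if (p.1 : ℕ) = n' + 1 - 1 then Dm T a p.2 q.2 else 0)
          else charmatrix (tsrMatrix T a) p (q.1 + 1, q.2)) = 0
      rw [if_pos hval, if_neg (show ¬ ((p.1 : ℕ) = n' + 1 - 1) by omega)]
    · have hval : ((q.1 + 1 : Fin (n' + 1)) : ℕ) = (q.1 : ℕ) + 1 := by
        rw [Fin.val_add_one, if_neg (fun h => hq1 (by rw [h, Fin.val_last]))]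
      show (if ((q.1 + 1 : Fin (n' + 1)) : ℕ) = 0
          then (if (p.1 : ℕ) = n' + 1 - 1 then Dm T a p.2 q.2 else 0)
          else charmatrix (tsrMatrix T a) p (q.1 + 1, q.2)) = 0
      rw [if_neg (show ¬ (((q.1 + 1 : Fin (n' + 1)) : ℕ) = 0) from by rw [hval]; omega)]
      have hne : p ≠ (q.1 + 1, q.2) := by
        intro h
        have := congrArg (fun z : Fin (n' + 1) × Fin m => ((z.1 : Fin (n' + 1)) : ℕ)) h
        simp only at this
        rw [hval] at this
        omega
      rw [charmatrix_apply_ne _ _ _ hne]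
      have htsr : tsrMatrix T a p (q.1 + 1, q.2) = 0 := by
        show (if ((q.1 + 1 : Fin (n' + 1)) : ℕ) = (p.1 : ℕ) + 1
            then (if p.2 = q.2 then 1 else 0)
            else if (p.1 : ℕ) = n' + 1 - 1 then a (q.1 + 1) * T p.2 q.2 else 0) = 0
        rw [if_neg (show ¬ (((q.1 + 1 : Fin (n' + 1)) : ℕ) = (p.1 : ℕ) + 1) from by
          rw [hval]; omega)]
        rw [if_neg (show ¬ ((p.1 : ℕ) = n' + 1 - 1) by omega)]
      rw [htsr, map_zero, neg_zero]
  have hdetQ : Q.det = ((Equiv.Perm.sign π : ℤ) : F[X]) * (Pm T a).det := by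
    rw [hQ]
    exact_mod_cast Matrix.det_permute' π (Pm T a)
  have h0mem : (0 : ℕ) ∈ Finset.image b Finset.univ := by
    refine Finset.mem_image.mpr ⟨(Fin.last n', ⟨0, by omega⟩), Finset.mem_univ _, ?_⟩
    simp [hb, Fin.val_last]
  have hval0 : ((Fin.last n' + 1 : Fin (n' + 1)) : ℕ) = 0 := by
    rw [Fin.val_add_one, if_pos rfl]
  have hblock0 : ((Q.toSquareBlock b 0).det) = (Dm T a).det := by
    have hbiff : ∀ p : Fin (n' + 1) × Fin m, b p = 0 ↔ p.1 = Fin.last n' := by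
      intro p
      constructor
      · intro h
        have := p.1.isLt
        refine Fin.ext ?_
        simp only [hb] at h
        rw [Fin.val_last]
        omega
      · intro h
        simp [hb, h, Fin.val_last]
    set e : Fin m ≃ {p : Fin (n' + 1) × Fin m // b p = 0} :=
      { toFun := fun s => ⟨(Fin.last n', s), (hbiff _).mpr rfl⟩
        invFun := fun p => p.1.2
        left_inv := fun s => rfl
        right_inv := by
          rintro ⟨⟨p1, p2⟩, hp⟩
          have : p1 = Fin.last n' := (hbiff _).mp hp
          subst this
          rfl } with he
    rw [← Matrix.det_submatrix_equiv_self e (Q.toSquareBlock b 0)]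
    congr 1
    refine Matrix.ext fun s t => ?_
    rw [Matrix.submatrix_apply, Matrix.toSquareBlock_def]
    show Q (Fin.last n', s) (Fin.last n', t) = Dm T a s t
    rw [hQapp]
    show (if ((Fin.last n' + 1 : Fin (n' + 1)) : ℕ) = 0
        then (if ((Fin.last n' : Fin (n' + 1)) : ℕ) = n' + 1 - 1 then Dm T a s t else 0)
        else charmatrix (tsrMatrix T a) (Fin.last n', s) (Fin.last n' + 1, t)) = Dm T a s t
    rw [if_pos hval0, if_pos (show ((Fin.last n' : Fin (n' + 1)) : ℕ) = n' + 1 - 1 from by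
      rw [Fin.val_last]; omega)]
  have hblockk : ∀ k ∈ (Finset.image b Finset.univ).erase 0,
      IsUnit ((Q.toSquareBlock b k).det) := by
    intro k hk
    have hk0 : k ≠ 0 := Finset.ne_of_mem_erase hk
    have hkmem := Finset.mem_of_mem_erase hk
    obtain ⟨p₀, _, hp₀⟩ := Finset.mem_image.mp hkmem
    have hkle : k ≤ n' := by
      simp only [hb] at hp₀
      omega
    set i₀ : ℕ := n' - k with hi₀
    have hi₀lt : i₀ < n' := by omega
    have hbiff : ∀ p : Fin (n' + 1) × Fin m, b p = k ↔ (p.1 : ℕ) = i₀ := by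
      intro p
      have := p.1.isLt
      simp only [hb, hi₀]
      omega
    have hentry : ∀ p q : {p : Fin (n' + 1) × Fin m // b p = k},
        (Q.toSquareBlock b k) p q = (-(1 : Matrix {p : Fin (n' + 1) × Fin m // b p = k}
          {p : Fin (n' + 1) × Fin m // b p = k} F[X])) p q := by
      intro p q
      have hp1 : (p.1.1 : ℕ) = i₀ := (hbiff _).mp p.2
      have hq1 : (q.1.1 : ℕ) = i₀ := (hbiff _).mp q.2
      show Q p.1 q.1 = (-(1 : Matrix {p : Fin (n' + 1) × Fin m // b p = k}
          {p : Fin (n' + 1) × Fin m // b p = k} F[X])) p q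
      rw [hQapp]
      have hval : ((q.1.1 + 1 : Fin (n' + 1)) : ℕ) = i₀ + 1 := by
        rw [Fin.val_add_one, if_neg, hq1]
        intro h
        rw [h, Fin.val_last] at hq1
        omega
      show (if ((q.1.1 + 1 : Fin (n' + 1)) : ℕ) = 0
          then (if (p.1.1 : ℕ) = n' + 1 - 1 then Dm T a p.1.2 q.1.2 else 0)
          else charmatrix (tsrMatrix T a) p.1 (q.1.1 + 1, q.1.2)) = _
      rw [if_neg (show ¬ (((q.1.1 + 1 : Fin (n' + 1)) : ℕ) = 0) from by rw [hval]; omega)]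
      have hne : p.1 ≠ (q.1.1 + 1, q.1.2) := by
        intro h
        have := congrArg (fun z : Fin (n' + 1) × Fin m => ((z.1 : Fin (n' + 1)) : ℕ)) h
        simp only at this
        rw [hval, hp1] at this
        omega
      rw [charmatrix_apply_ne _ _ _ hne]
      have htsr : tsrMatrix T a p.1 (q.1.1 + 1, q.1.2)
          = (if p.1.2 = q.1.2 then 1 else 0) := by
        show (if ((q.1.1 + 1 : Fin (n' + 1)) : ℕ) = (p.1.1 : ℕ) + 1
            then (if p.1.2 = q.1.2 then 1 else 0)
            else if (p.1.1 : ℕ) = n' + 1 - 1 then a (q.1.1 + 1) * T p.1.2 q.1.2 else 0)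
          = (if p.1.2 = q.1.2 then 1 else 0)
        rw [if_pos (show ((q.1.1 + 1 : Fin (n' + 1)) : ℕ) = (p.1.1 : ℕ) + 1 from by
          rw [hval, hp1])]
      rw [htsr]
      have hpq : (p = q) ↔ (p.1.2 = q.1.2) := by
        constructor
        · intro h; rw [h]
        · intro h
          refine Subtype.ext (Prod.ext (Fin.ext ?_) h)
          rw [hp1, hq1]
      by_cases hst : p.1.2 = q.1.2
      · have := hpq.mpr hst
        simp [hst, this, Matrix.one_apply]
      · have hne2 : p ≠ q := fun h => hst (hpq.mp h)
        simp [hst, hne2, Matrix.one_apply]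
    have hQk : Q.toSquareBlock b k = -(1 : Matrix _ _ F[X]) := by
      refine Matrix.ext fun p q => ?_
      exact hentry p q
    rw [hQk, Matrix.det_neg, det_one, mul_one]
    exact (IsUnit.neg isUnit_one).pow _
  have hQdet2 : Q.det = (Dm T a).det * ∏ k ∈ (Finset.image b Finset.univ).erase 0,
      (Q.toSquareBlock b k).det := by
    rw [hbt.det, ← Finset.mul_prod_erase _ _ h0mem, hblock0]
  set v := ∏ k ∈ (Finset.image b Finset.univ).erase 0, (Q.toSquareBlock b k).det with hv
  have hvunit : IsUnit v :=
    Finset.prod_induction _ IsUnit (fun _ _ => IsUnit.mul) isUnit_one hblockk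
  have hsign : ((Equiv.Perm.sign π : ℤ) : F[X]) * ((Equiv.Perm.sign π : ℤ) : F[X]) = 1 := by
    rcases Int.units_eq_one_or (Equiv.Perm.sign π) with h | h <;> rw [h] <;> norm_num
  refine ⟨((Equiv.Perm.sign π : ℤ) : F[X]) * v, ?_, ?_⟩
  · refine IsUnit.mul ?_ hvunit
    rcases Int.units_eq_one_or (Equiv.Perm.sign π) with h | h <;> rw [h] <;> simp
  · have h1 : ((Equiv.Perm.sign π : ℤ) : F[X]) * Q.det = (Pm T a).det := by
      rw [hdetQ, ← mul_assoc, hsign, one_mul]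
    rw [← h1, hQdet2]
    ring

end TSRAux

theorem tsr_charpoly_reducible {F : Type*} [Field F] [Finite F] {m n : ℕ}
    (hm : 2 ≤ m) (hn : 1 ≤ n) (T : Matrix (Fin m) (Fin m) F)
    (hT : ¬ Irreducible T.charpoly) (a : Fin n → F) :
    ¬ Irreducible (tsrMatrix T a).charpoly := by
  classical
  open TSRAux in
  -- charpoly of T has natDegree m
  have hTdeg : T.charpoly.natDegree = m := by
    rw [Matrix.charpoly_natDegree_eq_dim, Fintype.card_fin]
  have hTne : T.charpoly ≠ 0 := (Matrix.charpoly_monic T).ne_zero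
  have hTnu : ¬ IsUnit T.charpoly := by
    intro h
    have := natDegree_eq_zero_of_isUnit h
    omega
  -- factor charpoly T
  obtain ⟨g, h, hgh, hgu, hhu⟩ : ∃ g h : F[X], T.charpoly = g * h ∧ ¬ IsUnit g ∧ ¬ IsUnit h := by
    rw [irreducible_iff, not_and_or] at hT
    rcases hT with h1 | h2
    · exact absurd hTnu h1  -- h1 : ¬¬IsUnit
    · push_neg at h2
      obtain ⟨g, h, he, hg, hh⟩ := h2
      exact ⟨g, h, he, hg, hh⟩
  have hg0 : g ≠ 0 := fun h0 => hTne (by rw [hgh, h0, zero_mul])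
  have hh0 : h ≠ 0 := fun h0 => hTne (by rw [hgh, h0, mul_zero])
  have hgd : 1 ≤ g.natDegree := by
    by_contra h0
    push_neg at h0
    have : g.natDegree = 0 := by omega
    have := Polynomial.eq_C_of_natDegree_eq_zero this
    exact hgu (this ▸ Polynomial.isUnit_C.mpr
      (isUnit_iff_ne_zero.mpr (fun hc => hg0 (by rw [this, hc, map_zero]))))
  have hhd : 1 ≤ h.natDegree := by
    by_contra h0
    push_neg at h0
    have : h.natDegree = 0 := by omega
    have := Polynomial.eq_C_of_natDegree_eq_zero this
    exact hhu (this ▸ Polynomial.isUnit_C.mpr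
      (isUnit_iff_ne_zero.mpr (fun hc => hh0 (by rw [this, hc, map_zero]))))
  -- main factorization of the big charpoly
  have e1 : (tsrMatrix T a).charpoly = (TSRAux.Pm T a).det := by
    rw [Matrix.charpoly, ← TSRAux.mulE hn T a, Matrix.det_mul, TSRAux.det_Em, mul_one]
  obtain ⟨u, hu, e2⟩ := TSRAux.det_Pm hn (by omega) T a
  have e3 : (TSRAux.Dm T a).det = TSRAux.hmg T.charpoly (X ^ n) (TSRAux.fS a) :=
    TSRAux.det_Dm T a
  have e4 : TSRAux.hmg T.charpoly (X ^ n) (TSRAux.fS a)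
      = TSRAux.hmg g (X ^ n) (TSRAux.fS a) * TSRAux.hmg h (X ^ n) (TSRAux.fS a) := by
    rw [hgh]
    exact TSRAux.hmg_mul g h hg0 hh0 _ _
  have hfact : (tsrMatrix T a).charpoly
      = (u * TSRAux.hmg g (X ^ n) (TSRAux.fS a)) * TSRAux.hmg h (X ^ n) (TSRAux.fS a) := by
    rw [e1, e2, e3, e4]
    ring
  intro hirr
  rcases hirr.isUnit_or_isUnit hfact with hcase | hcase
  · exact TSRAux.hmg_not_isUnit g hgd hn a (isUnit_of_mul_isUnit_right
      hcase)
  · exact TSRAux.hmg_not_isUnit h hhd hn a hcase
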